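/- For τ in the upper half-plane, the theta constants satisfy Jacobi's identity θ_{1,0}(0, τ)⁴ + θ_{0,1}(0, τ)⁴ = θ_{0,0}(0, τ)⁴. Equivalently, defining the elliptic modulus k = θ_{1,0}²(0,τ)/θ_{0,0}²(0,τ) and the complementary modulus k' = θ_{0,1}²(0,τ)/θ_{0,0}²(0,τ), one has k² + k'² = 1. -/

import Mathlib

open Complex Real

/-- Theta function with characteristics `m, n ∈ {0,1}`:
`θ_{m,n}(z,τ) = ∑_{k∈ℤ} exp(iπτ(k+m/2)² + 2πi(k+m/2)(z+n/2))`. -/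
noncomputable def theta (m n : ℕ) (z τ : ℂ) : ℂ :=
  ∑' k : ℤ, Complex.exp (Real.pi * Complex.I * τ * ((k : ℂ) + (m : ℂ) / 2) ^ 2
    + 2 * Real.pi * Complex.I * ((k : ℂ) + (m : ℂ) / 2) * (z + (n : ℂ) / 2))

/-! ### Auxiliary definitions for the proof of Jacobi's identity -/

abbrev JacobiAux.V4 := (ℤ × ℤ) × (ℤ × ℤ)

namespace JacobiAux

noncomputable def av (τ : ℂ) (k : ℤ) : ℂ := Complex.exp (Real.pi * Complex.I * τ * (k:ℂ)^2)
noncomputable def bv (τ : ℂ) (k : ℤ) : ℂ :=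
  Complex.exp (Real.pi * Complex.I * τ * (k:ℂ)^2 + Real.pi * Complex.I * (k:ℂ))
noncomputable def cv (τ : ℂ) (k : ℤ) : ℂ := Complex.exp (Real.pi * Complex.I * τ * ((k:ℂ)+1/2)^2)

lemma theta00 (τ : ℂ) : theta 0 0 0 τ = ∑' k : ℤ, av τ k := by
  unfold theta av; refine tsum_congr fun k => ?_; norm_num

lemma theta01 (τ : ℂ) : theta 0 1 0 τ = ∑' k : ℤ, bv τ k := by
  unfold theta bv; refine tsum_congr fun k => ?_; congr 1; push_cast; ring

lemma theta10 (τ : ℂ) : theta 1 0 0 τ = ∑' k : ℤ, cv τ k := by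
  unfold theta cv; refine tsum_congr fun k => ?_; congr 1; push_cast; ring

lemma bv_eq (τ : ℂ) (k : ℤ) : bv τ k = av τ k * (-1:ℂ)^k := by
  rw [bv, Complex.exp_add, av]
  congr 1
  rw [show Real.pi * Complex.I * (k:ℂ) = (k:ℤ) * (Real.pi * Complex.I) by push_cast; ring,
    Complex.exp_int_mul, Complex.exp_pi_mul_I]

lemma norm_av (τ : ℂ) (k : ℤ) : ‖av τ k‖ = Real.exp (-(Real.pi * τ.im * (k:ℝ)^2)) := by
  rw [av, Complex.norm_exp]
  congr 1
  rw [show Real.pi * Complex.I * τ * (k:ℂ)^2 = ((Real.pi * (k:ℝ)^2 : ℝ) : ℂ) * τ * Complex.I by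
    push_cast; ring, mul_I_re, im_ofReal_mul]
  ring

lemma norm_cv (τ : ℂ) (k : ℤ) : ‖cv τ k‖ = Real.exp (-(Real.pi * τ.im * ((k:ℝ)+1/2)^2)) := by
  rw [cv, Complex.norm_exp]
  congr 1
  rw [show Real.pi * Complex.I * τ * ((k:ℂ)+1/2)^2
      = ((Real.pi * ((k:ℝ)+1/2)^2 : ℝ) : ℂ) * τ * Complex.I by push_cast; ring,
    mul_I_re, im_ofReal_mul]
  ring

lemma sumnorm_av {τ : ℂ} (hτ : 0 < τ.im) : Summable fun k : ℤ => ‖av τ k‖ := by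
  refine ((summable_pow_mul_jacobiTheta₂_term_bound 0 hτ 0).congr fun k => ?_)
  rw [norm_av]; norm_num; ring

lemma sumnorm_bv {τ : ℂ} (hτ : 0 < τ.im) : Summable fun k : ℤ => ‖bv τ k‖ := by
  refine (sumnorm_av hτ).congr fun k => ?_
  rw [bv_eq, norm_mul]
  simp

lemma sumnorm_cv {τ : ℂ} (hτ : 0 < τ.im) : Summable fun k : ℤ => ‖cv τ k‖ := by
  refine (summable_pow_mul_jacobiTheta₂_term_bound (τ.im/2) hτ 0).of_nonneg_of_le
    (fun k => norm_nonneg _) fun k => ?_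
  rw [norm_cv, pow_zero, one_mul, Real.exp_le_exp]
  push_cast
  nlinarith [neg_abs_le (k:ℝ), mul_pos Real.pi_pos hτ, Real.pi_pos, hτ]

lemma pow4_norm {f : ℤ → ℂ} (hf : Summable fun k => ‖f k‖) :
    Summable (fun q : V4 => ‖(f q.1.1 * f q.1.2) * (f q.2.1 * f q.2.2)‖) ∧
    (∑' k, f k)^4 = ∑' q : V4, f q.1.1 * f q.1.2 * f q.2.1 * f q.2.2 := by
  have hnorm2 : Summable fun p : ℤ×ℤ => ‖f p.1 * f p.2‖ := by
    refine ((hf.mul_of_nonneg hf (fun _ => norm_nonneg _) (fun _ => norm_nonneg _)).congr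
      fun p => ?_)
    simp [norm_mul]
  have h2 : (∑' k, f k)^2 = ∑' p : ℤ×ℤ, f p.1 * f p.2 := by
    rw [sq, tsum_mul_tsum_of_summable_norm hf hf]
  have hnorm4 : Summable (fun q : V4 => ‖(f q.1.1 * f q.1.2) * (f q.2.1 * f q.2.2)‖) := by
    refine ((hnorm2.mul_of_nonneg hnorm2 (fun _ => norm_nonneg _) (fun _ => norm_nonneg _)).congr
      fun q => ?_)
    simp [norm_mul]
  refine ⟨hnorm4, ?_⟩
  calc (∑' k, f k)^4 = ((∑' k, f k)^2)^2 := by ring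
    _ = ∑' q : V4, (f q.1.1 * f q.1.2) * (f q.2.1 * f q.2.2) := by
        rw [h2, sq, tsum_mul_tsum_of_summable_norm hnorm2 hnorm2]
    _ = _ := tsum_congr fun q => by ring

def Pod (v : V4) : Prop := (v.1.1 + v.1.2 + v.2.1 + v.2.2) % 2 = 1

def Efun (p : Bool × {v : V4 // Pod v}) : V4 :=
  let a := p.2.1.1.1; let b := p.2.1.1.2; let c := p.2.1.2.1; let d := p.2.1.2.2
  (((a+b+c+d-1)/2, (a+b-c-d-1)/2), ((a-b+c-d-1)/2, ((if p.1 then -(a-b-c+d) else (a-b-c+d))-1)/2))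

def Einv (w : V4) : Bool × {v : V4 // Pod v} :=
  let w1 := w.1.1; let w2 := w.1.2; let w3 := w.2.1; let w4 := w.2.2
  if h : (w1+w2+w3+w4) % 2 = 0 then
    (false, ⟨(((w1+w2+w3+w4+2)/2, (w1+w2-w3-w4)/2), ((w1-w2+w3-w4)/2, (w1-w2-w3+w4)/2)), by
      unfold Pod; simp only; omega⟩)
  else
    (true, ⟨(((w1+w2+w3-w4+1)/2, (w1+w2-w3+w4+1)/2), ((w1-w2+w3+w4+1)/2, (w1-w2-w3-w4-1)/2)), by
      unfold Pod; simp only; omega⟩)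

def Eequiv : (Bool × {v : V4 // Pod v}) ≃ V4 where
  toFun := Efun
  invFun := Einv
  left_inv := by
    rintro ⟨s, ⟨⟨⟨a, b⟩, ⟨c, d⟩⟩, h⟩⟩
    unfold Pod at h; simp only at h
    cases s <;>
      simp only [Efun, Einv, Bool.false_eq_true, if_true, if_false, ite_true, ite_false] <;>
      split_ifs with h2 <;>
      first
      | (exfalso; omega)
      | (refine Prod.ext rfl (Subtype.ext ?_)
         refine Prod.ext (Prod.ext ?_ ?_) (Prod.ext ?_ ?_) <;> simp only <;> omega)
  right_inv := by
    rintro ⟨⟨w1, w2⟩, ⟨w3, w4⟩⟩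
    simp only [Einv]
    split_ifs with h2 <;>
      simp only [Efun, Bool.false_eq_true, if_true, if_false, ite_true, ite_false] <;>
      refine Prod.ext (Prod.ext ?_ ?_) (Prod.ext ?_ ?_) <;> simp only <;> omega

lemma Efun_val (τ : ℂ) (p : Bool × {v : V4 // Pod v}) :
    cv τ (Efun p).1.1 * cv τ (Efun p).1.2 * cv τ (Efun p).2.1 * cv τ (Efun p).2.2 =
    av τ p.2.1.1.1 * av τ p.2.1.1.2 * av τ p.2.1.2.1 * av τ p.2.1.2.2 := by
  obtain ⟨s, ⟨⟨⟨a, b⟩, ⟨c, d⟩⟩, h⟩⟩ := p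
  unfold Pod at h; simp only at h
  simp only [Efun, av, cv, ← Complex.exp_add]
  congr 1
  have e1 : (((a+b+c+d-1)/2 : ℤ) : ℂ) = ((a:ℂ)+b+c+d-1)/2 := by
    have : ((a+b+c+d-1)/2 : ℤ) * 2 = a+b+c+d-1 := by omega
    have := congrArg (Int.cast : ℤ → ℂ) this
    push_cast at this ⊢; linear_combination this / 2
  have e2 : (((a+b-c-d-1)/2 : ℤ) : ℂ) = ((a:ℂ)+b-c-d-1)/2 := by
    have : ((a+b-c-d-1)/2 : ℤ) * 2 = a+b-c-d-1 := by omega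
    have := congrArg (Int.cast : ℤ → ℂ) this
    push_cast at this ⊢; linear_combination this / 2
  have e3 : (((a-b+c-d-1)/2 : ℤ) : ℂ) = ((a:ℂ)-b+c-d-1)/2 := by
    have : ((a-b+c-d-1)/2 : ℤ) * 2 = a-b+c-d-1 := by omega
    have := congrArg (Int.cast : ℤ → ℂ) this
    push_cast at this ⊢; linear_combination this / 2
  cases s <;> simp only [Bool.false_eq_true, if_true, if_false, ite_true, ite_false]
  · have e4 : ((((a-b-c+d)-1)/2 : ℤ) : ℂ) = ((a:ℂ)-b-c+d-1)/2 := by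
      have : (((a-b-c+d)-1)/2 : ℤ) * 2 = a-b-c+d-1 := by omega
      have := congrArg (Int.cast : ℤ → ℂ) this
      push_cast at this ⊢; linear_combination this / 2
    rw [e1, e2, e3, e4]; ring
  · have e4 : (((-(a-b-c+d)-1)/2 : ℤ) : ℂ) = (-((a:ℂ)-b-c+d)-1)/2 := by
      have : ((-(a-b-c+d)-1)/2 : ℤ) * 2 = -(a-b-c+d)-1 := by omega
      have := congrArg (Int.cast : ℤ → ℂ) this
      push_cast at this ⊢; linear_combination this / 2
    rw [e1, e2, e3, e4]; ring

/-- Jacobi's identity for theta constants. -/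
theorem jacobi_identity {τ : ℂ} (hτ : 0 < τ.im) :
    theta 1 0 0 τ ^ 4 + theta 0 1 0 τ ^ 4 = theta 0 0 0 τ ^ 4 := by
  obtain ⟨nA, eA⟩ := pow4_norm (sumnorm_av hτ)
  obtain ⟨nB, eB⟩ := pow4_norm (sumnorm_bv hτ)
  obtain ⟨nC, eC⟩ := pow4_norm (sumnorm_cv hτ)
  rw [theta00, theta01, theta10, eA, eB, eC]
  set A : V4 → ℂ := fun q => av τ q.1.1 * av τ q.1.2 * av τ q.2.1 * av τ q.2.2 with hA
  set B : V4 → ℂ := fun q => bv τ q.1.1 * bv τ q.1.2 * bv τ q.2.1 * bv τ q.2.2 with hB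
  set C : V4 → ℂ := fun q => cv τ q.1.1 * cv τ q.1.2 * cv τ q.2.1 * cv τ q.2.2 with hC
  have sA : Summable A := nA.of_norm.congr fun q => by ring
  have sB : Summable B := nB.of_norm.congr fun q => by ring
  have sC : Summable C := nC.of_norm.congr fun q => by ring
  -- rewrite B in terms of A and a sign
  have hBA : ∀ v : V4, B v = A v * (-1:ℂ)^(v.1.1+v.1.2+v.2.1+v.2.2) := by
    intro v
    simp only [hA, hB, bv_eq]
    rw [zpow_add₀ (by norm_num : (-1:ℂ) ≠ 0), zpow_add₀ (by norm_num : (-1:ℂ) ≠ 0),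
      zpow_add₀ (by norm_num : (-1:ℂ) ≠ 0)]
    ring
  -- the difference A - B is supported on odd-sum quadruples, where it equals 2 * A
  have key : ∑' v : V4, A v - ∑' v : V4, B v = ∑' v : V4, C v := by
    rw [← Summable.tsum_sub sA sB]
    have hsupp : Function.support (fun v : V4 => A v - B v) ⊆ {v | Pod v} := by
      intro v hv
      by_contra hP
      apply hv
      have hP' : ¬ Pod v := hP
      have heven : Even (v.1.1+v.1.2+v.2.1+v.2.2) := by
        rw [Int.even_iff]; unfold Pod at hP'; omega
      simp only [hBA v, heven.neg_one_zpow, mul_one, sub_self]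
    rw [← tsum_subtype_eq_of_support_subset hsupp]
    have hodd : ∀ v : {v : V4 // Pod v}, A v.1 - B v.1 = 2 * A v.1 := by
      rintro ⟨v, hv⟩
      have hoddv : Odd (v.1.1+v.1.2+v.2.1+v.2.2) := by
        rw [Int.odd_iff]; exact hv
      simp only [hBA v, hoddv.neg_one_zpow, mul_neg_one]
      ring
    calc ∑' v : {v : V4 // Pod v}, (A v.1 - B v.1)
        = ∑' v : {v : V4 // Pod v}, 2 * A v.1 := tsum_congr hodd
      _ = 2 * ∑' v : {v : V4 // Pod v}, A v.1 := tsum_mul_left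
      _ = ∑' v : V4, C v := ?_
    -- now use the bijection
    rw [← Eequiv.tsum_eq C]
    have hCE : ∀ p : Bool × {v : V4 // Pod v}, C (Eequiv p) = A p.2.1 := fun p => Efun_val τ p
    have sF : Summable (fun p : Bool × {v : V4 // Pod v} => A p.2.1) :=
      (Eequiv.summable_iff.mpr sC).congr hCE
    have sfib : Summable (fun v : {v : V4 // Pod v} => A v.1) :=
      (sA.subtype {v | Pod v}).congr fun v => rfl
    rw [tsum_congr hCE, Summable.tsum_prod' sF (fun b => sfib.congr fun v => rfl)]
    rw [tsum_fintype (fun b : Bool => ∑' v : {v : V4 // Pod v}, A (b, v).2.1)]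
    rw [Fintype.sum_bool, two_mul]
  linear_combination -key

end JacobiAux

theorem stmt_16 (τ : ℂ) (hτ : 0 < τ.im) (hne : theta 0 0 0 τ ≠ 0) :
    theta 1 0 0 τ ^ 4 + theta 0 1 0 τ ^ 4 = theta 0 0 0 τ ^ 4 ∧
    (theta 1 0 0 τ ^ 2 / theta 0 0 0 τ ^ 2) ^ 2 +
      (theta 0 1 0 τ ^ 2 / theta 0 0 0 τ ^ 2) ^ 2 = 1 := by
  have J := JacobiAux.jacobi_identity hτ
  refine ⟨J, ?_⟩
  have h4 : theta 0 0 0 τ ^ 4 ≠ 0 := pow_ne_zero _ hne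
  field_simp
  linear_combination J
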